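/- Let G = (V,E) be a finite undirected graph, let G'' = (V'',E'') be the VSC reduction graph of G, and let U ⊆ V be a vertex cover of G. Define F = {v' : v ∈ U}. Then |F| = |U| and the directed graph G'' \ F obtained by deleting the vertices of F and all edges incident to them is singly-connected. -/

import Mathlib

/-- A simple (directed) path from `v` to `w` in the directed graph with edge relation `E`:
a nonempty list of pairwise distinct vertices starting at `v`, ending at `w`,
with consecutive vertices joined by edges. -/
def IsSimplePath {V : Type*} (E : V → V → Prop) (v w : V) (p : List V) : Prop :=
  p.Chain' E ∧ p.head? = some v ∧ p.getLast? = some w ∧ p.Nodup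

/-- A directed graph is singly-connected if for every pair of vertices there is
at most one simple path between them. -/
def SinglyConnected {V : Type*} (E : V → V → Prop) : Prop :=
  ∀ v w : V, ∀ p q : List V, IsSimplePath E v w p → IsSimplePath E v w q → p = q

/-- The vertex set of the VSC reduction graph of an undirected graph `G`: a vertex `v'`
for every vertex `v` of `G` and two vertices `e'`, `e''` for every edge `e` of `G`. -/
def VSCVert {V : Type*} (G : SimpleGraph V) : Type _ :=
  V ⊕ (G.edgeSet ⊕ G.edgeSet)

/-- The vertex `v'` of the VSC reduction graph. -/
def VSCVert.vv {V : Type*} (G : SimpleGraph V) (v : V) : VSCVert G :=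
  Sum.inl v

/-- The vertex `e'` of the VSC reduction graph. -/
def VSCVert.eA {V : Type*} (G : SimpleGraph V) (e : G.edgeSet) : VSCVert G :=
  Sum.inr (Sum.inl e)

/-- The vertex `e''` of the VSC reduction graph. -/
def VSCVert.eB {V : Type*} (G : SimpleGraph V) (e : G.edgeSet) : VSCVert G :=
  Sum.inr (Sum.inr e)

/-- The edge set of the VSC reduction graph of `G`: for every undirected edge
`e = {u, w}` of `G`, the four edges `(e', u')`, `(e', w')`, `(u', e'')`, `(w', e'')`
(i.e. edges `(e', v')` and `(v', e'')` for every endpoint `v` of `e`). -/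
def VSCEdges {V : Type*} (G : SimpleGraph V) : Set (VSCVert G × VSCVert G) :=
  {p | (∃ (e : G.edgeSet) (v : V), v ∈ (e : Sym2 V) ∧ p = (VSCVert.eA G e, VSCVert.vv G v)) ∨
       (∃ (e : G.edgeSet) (v : V), v ∈ (e : Sym2 V) ∧ p = (VSCVert.vv G v, VSCVert.eB G e))}

/-- A vertex cover of the undirected graph `G`: a set of vertices meeting every edge. -/
def IsVertexCover {V : Type*} (G : SimpleGraph V) (U : Set V) : Prop :=
  ∀ e ∈ G.edgeSet, ∃ v ∈ U, v ∈ e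

namespace VSCAux

open VSCVert

variable {V : Type*} {G : SimpleGraph V} {U : Set V}

/-- The vertex type after deleting `F`. -/
abbrev SubV (G : SimpleGraph V) (U : Set V) :=
  {x : VSCVert G // x ∉ {y : VSCVert G | ∃ v ∈ U, y = vv G v}}

/-- The edge relation after deleting `F`. -/
abbrev E' (G : SimpleGraph V) (U : Set V) (a b : SubV G U) : Prop :=
  (a.1, b.1) ∈ VSCEdges G

lemma notU {a : SubV G U} {u : V} (h : a.1 = vv G u) : u ∉ U := by
  intro hu
  exact a.2 ⟨u, hu, h⟩

lemma edge_cases {a b : SubV G U} (h : E' G U a b) :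
    (∃ (e : G.edgeSet) (u : V), u ∈ (e : Sym2 V) ∧ a.1 = eA G e ∧ b.1 = vv G u ∧ u ∉ U) ∨
    (∃ (e : G.edgeSet) (u : V), u ∈ (e : Sym2 V) ∧ a.1 = vv G u ∧ b.1 = eB G e ∧ u ∉ U) := by
  rcases h with ⟨e, u, hu, hp⟩ | ⟨e, u, hu, hp⟩
  · rw [Prod.mk.injEq] at hp
    exact Or.inl ⟨e, u, hu, hp.1, hp.2, notU hp.2⟩
  · rw [Prod.mk.injEq] at hp
    exact Or.inr ⟨e, u, hu, hp.1, hp.2, notU hp.1⟩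

lemma two_step {a b c : SubV G U} (h1 : E' G U a b) (h2 : E' G U b c) :
    ∃ (e f : G.edgeSet) (u : V), a.1 = eA G e ∧ b.1 = vv G u ∧ c.1 = eB G f ∧
      u ∈ (e : Sym2 V) ∧ u ∈ (f : Sym2 V) ∧ u ∉ U := by
  rcases edge_cases h1 with ⟨e, u, hu, ha, hb, hnu⟩ | ⟨e, u, hu, ha, hb, hnu⟩
  · rcases edge_cases h2 with ⟨f, x, hx, hb', hc, _⟩ | ⟨f, x, hx, hb', hc, _⟩
    · rw [hb] at hb'; simp [vv, eA] at hb'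
    · rw [hb] at hb'
      injection hb' with hb'
      subst hb'
      exact ⟨e, f, u, ha, hb, hc, hu, hx, hnu⟩
  · rcases edge_cases h2 with ⟨f, x, hx, hb', hc, _⟩ | ⟨f, x, hx, hb', hc, _⟩
    · rw [hb] at hb'
      injection hb' with hb'
      injection hb'
    · rw [hb] at hb'
      injection hb'

lemma no_three {a b c d : SubV G U} (h1 : E' G U a b) (h2 : E' G U b c)
    (h3 : E' G U c d) : False := by
  obtain ⟨e, f, u, _, _, hc, _⟩ := two_step h1 h2
  rcases edge_cases h3 with ⟨g, x, _, hc', _⟩ | ⟨g, x, _, hc', _⟩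
  · rw [hc] at hc'
    injection hc' with hc'
    injection hc'
  · rw [hc] at hc'
    injection hc'

lemma sym2_uniq {e : Sym2 V} {z u u' : V} (hz : z ∈ e) (hu : u ∈ e) (hu' : u' ∈ e)
    (h1 : u ≠ z) (h2 : u' ≠ z) : u = u' := by
  induction e using Sym2.ind with
  | _ x y =>
    rw [Sym2.mem_iff] at hz hu hu'
    rcases hz with rfl | rfl <;> rcases hu with rfl | rfl <;> rcases hu' with rfl | rfl <;>
      first | rfl | (exfalso; exact h1 rfl) | (exfalso; exact h2 rfl)

lemma singleton_of (v : SubV G U) (q : List (SubV G U)) (hh : q.head? = some v)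
    (hl : q.getLast? = some v) (hn : q.Nodup) : q = [v] := by
  rcases q with _ | ⟨a, t⟩
  · simp at hh
  · obtain rfl : a = v := by simpa using hh
    rcases t with _ | ⟨b, t⟩
    · rfl
    · exfalso
      have hne : (a :: b :: t) ≠ [] := by simp
      have hg : (a :: b :: t).getLast hne = a := by
        have := (List.getLast?_eq_getLast hne).symm.trans hl
        simpa using this
      have hmem : (a :: b :: t).getLast hne ∈ b :: t := by
        rw [List.getLast_cons (by simp)]
        exact List.getLast_mem _
      rw [hg] at hmem
      rw [List.nodup_cons] at hn
      exact hn.1 hmem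

lemma path_shape {v w : SubV G U} {p : List (SubV G U)} (hvw : v ≠ w)
    (hp : IsSimplePath (E' G U) v w p) :
    (p = [v, w] ∧ E' G U v w) ∨
    (∃ m, p = [v, m, w] ∧ E' G U v m ∧ E' G U m w) := by
  obtain ⟨hc, hh, hl, hn⟩ := hp
  rcases p with _ | ⟨a, _ | ⟨b, _ | ⟨c, _ | ⟨d, t⟩⟩⟩⟩
  · simp at hh
  · simp at hh hl; exact absurd (hh.symm.trans hl) hvw
  · simp at hh hl
    subst hh; subst hl
    unfold List.Chain' at hc
    rw [List.isChain_cons_cons] at hc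
    exact Or.inl ⟨rfl, hc.1⟩
  · simp at hh hl
    subst hh; subst hl
    unfold List.Chain' at hc
    rw [List.isChain_cons_cons, List.isChain_cons_cons] at hc
    exact Or.inr ⟨b, rfl, hc.1, hc.2.1⟩
  · exfalso
    unfold List.Chain' at hc
    rw [List.isChain_cons_cons, List.isChain_cons_cons, List.isChain_cons_cons] at hc
    exact no_three hc.1 hc.2.1 hc.2.2.1

end VSCAux

namespace VSCAux

open VSCVert

variable {V : Type*} {G : SimpleGraph V} {U : Set V}

lemma mixed_absurd {v m w : SubV G U} (hE : E' G U v w) (h1 : E' G U v m)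
    (h2 : E' G U m w) : False := by
  obtain ⟨e, f, u, hv, _, hw, _⟩ := two_step h1 h2
  rcases edge_cases hE with ⟨g, x, _, _, hw', _⟩ | ⟨g, x, _, hv', _⟩
  · rw [hw] at hw'
    injection hw'
  · rw [hv] at hv'
    injection hv'

lemma middle_uniq (hU : IsVertexCover G U) {v m m' w : SubV G U}
    (h1 : E' G U v m) (h2 : E' G U m w) (h1' : E' G U v m') (h2' : E' G U m' w) :
    m = m' := by
  obtain ⟨e, f, u, hv, hm, hw, hue, huf, hnu⟩ := two_step h1 h2
  obtain ⟨e2, f2, u2, hv', hm', hw', hue2, huf2, hnu2⟩ := two_step h1' h2'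
  rw [hv] at hv'
  injection hv' with hv'
  injection hv' with hv'
  subst hv'
  obtain ⟨z, hz, hze⟩ := hU e e.2
  have : u = u2 := sym2_uniq hze hue hue2 (fun h => hnu (h ▸ hz)) (fun h => hnu2 (h ▸ hz))
  subst this
  exact Subtype.ext (hm.trans hm'.symm)

end VSCAux

open VSCVert in
/-- if `U` is a vertex cover of a finite undirected graph `G` and
`F = {v' : v ∈ U}`, then `|F| = |U|` and deleting the vertices in `F` (together with all
incident edges) from the VSC reduction graph of `G` leaves a singly-connected directed
graph. -/
theorem vsc_of_vertexCover {V : Type*} [Finite V] (G : SimpleGraph V) (U : Set V)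
    (hU : IsVertexCover G U) :
    ({x : VSCVert G | ∃ v ∈ U, x = vv G v}.ncard = U.ncard) ∧
    SinglyConnected (fun a b : {x : VSCVert G // x ∉ {y : VSCVert G | ∃ v ∈ U, y = vv G v}} =>
      (a.1, b.1) ∈ VSCEdges G) := by
  constructor
  · have hset : {x : VSCVert G | ∃ v ∈ U, x = vv G v} = (vv G) '' U := by
      ext x
      simp only [Set.mem_setOf_eq, Set.mem_image]
      constructor
      · rintro ⟨v, hv, rfl⟩; exact ⟨v, hv, rfl⟩
      · rintro ⟨v, hv, rfl⟩; exact ⟨v, hv, rfl⟩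
    rw [hset]
    exact Set.ncard_image_of_injective U (fun a b h => by injection h)
  · intro v w p q hp hq
    by_cases hvw : v = w
    · subst hvw
      rw [VSCAux.singleton_of v p hp.2.1 hp.2.2.1 hp.2.2.2,
          VSCAux.singleton_of v q hq.2.1 hq.2.2.1 hq.2.2.2]
    · rcases VSCAux.path_shape hvw hp with ⟨hp2, hE⟩ | ⟨m, hp3, h1, h2⟩ <;>
        rcases VSCAux.path_shape hvw hq with ⟨hq2, hE'⟩ | ⟨m', hq3, h1', h2'⟩
      · rw [hp2, hq2]
      · exact absurd (VSCAux.mixed_absurd hE h1' h2') (fun h => h)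
      · exact absurd (VSCAux.mixed_absurd hE' h1 h2) (fun h => h)
      · rw [hp3, hq3, VSCAux.middle_uniq hU h1 h2 h1' h2']
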